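/- Let n and N be positive integers, let R be a real N×n matrix, and let γ > 0 be an eigenvalue of R Rᵀ. Then both numbers λ₊ = (1 + √(1+4γ))/2 and λ₋ = (1 − √(1+4γ))/2 are eigenvalues of the symmetric (n+N)×(n+N) block matrix K = [[Iₙ, −Rᵀ],[−R, 0]]. -/
import Mathlib


open Matrix

lemma block_eig_aux {n N : ℕ} (R : Matrix (Fin N) (Fin n) ℝ) (γ l : ℝ)
    (hl : l * (1 - l) = -γ) (hl1 : l ≠ 1)
    (p : Fin N → ℝ) (hp : p ≠ 0) (hpe : (R * Rᵀ) *ᵥ p = γ • p) :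
    ∃ x : (Fin n ⊕ Fin N) → ℝ, x ≠ 0 ∧
      (Matrix.fromBlocks 1 (-Rᵀ) (-R) 0 : Matrix (Fin n ⊕ Fin N) (Fin n ⊕ Fin N) ℝ) *ᵥ x
        = l • x := by
  have h1l : (1 - l) ≠ 0 := sub_ne_zero.mpr (Ne.symm hl1)
  refine ⟨Sum.elim ((1 - l)⁻¹ • (Rᵀ *ᵥ p)) p, ?_, ?_⟩
  · intro hx
    exact hp (funext fun i => congrFun hx (Sum.inr i))
  · funext i
    cases i with
    | inl i =>
      simp only [fromBlocks_mulVec, Sum.elim_comp_inl, Sum.elim_comp_inr, Sum.elim_inl,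
        one_mulVec, neg_mulVec, Pi.add_apply, Pi.smul_apply, Pi.neg_apply, smul_eq_mul]
      field_simp
      ring
    | inr i =>
      simp only [fromBlocks_mulVec, Sum.elim_comp_inl, Sum.elim_comp_inr, Sum.elim_inr,
        zero_mulVec, neg_mulVec, mulVec_smul, add_zero, Pi.add_apply, Pi.smul_apply,
        Pi.neg_apply, Pi.zero_apply, smul_eq_mul]
      have h2 : R *ᵥ (Rᵀ *ᵥ p) = γ • p := by rw [mulVec_mulVec]; exact hpe
      rw [congrFun h2 i]
      simp only [Pi.smul_apply, smul_eq_mul]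
      field_simp
      linear_combination (-(p i)) * hl

/-- If `γ > 0` is an eigenvalue of `R Rᵀ`, then both
`λ₊ = (1 + √(1+4γ))/2` and `λ₋ = (1 − √(1+4γ))/2` are eigenvalues of the symmetric block
matrix `K = [[Iₙ, −Rᵀ],[−R, 0]]`. -/
theorem block_eigenvalue_pair {n N : ℕ} [NeZero n] [NeZero N]
    (R : Matrix (Fin N) (Fin n) ℝ)
    (K : Matrix (Fin n ⊕ Fin N) (Fin n ⊕ Fin N) ℝ)
    (hK : K = Matrix.fromBlocks 1 (-Rᵀ) (-R) 0)
    (γ : ℝ) (hγ : 0 < γ)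
    (hEig : ∃ p : Fin N → ℝ, p ≠ 0 ∧ (R * Rᵀ) *ᵥ p = γ • p) :
    (∃ x : (Fin n ⊕ Fin N) → ℝ, x ≠ 0 ∧ K *ᵥ x = ((1 + Real.sqrt (1 + 4 * γ)) / 2) • x) ∧
    (∃ x : (Fin n ⊕ Fin N) → ℝ, x ≠ 0 ∧ K *ᵥ x = ((1 - Real.sqrt (1 + 4 * γ)) / 2) • x) := by
  obtain ⟨p, hp, hpe⟩ := hEig
  subst hK
  have hs : Real.sqrt (1 + 4 * γ) ^ 2 = 1 + 4 * γ :=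
    Real.sq_sqrt (by linarith)
  have hs1 : 1 < Real.sqrt (1 + 4 * γ) := by
    nlinarith [Real.sqrt_nonneg (1 + 4 * γ)]
  constructor
  · exact block_eig_aux R γ _ (by nlinarith) (by intro h; nlinarith) p hp hpe
  · exact block_eig_aux R γ _ (by nlinarith) (by intro h; nlinarith) p hp hpe
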